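/- Define φ(t) := t·h(2/t − 1) for 0 < t ≤ 1, where h : (0,∞) → ℝ is differentiable, concave, h(1)=1, h'(1)=1/2, h(x) ≤ (x+1)/2 for all x, and h is not equal to (x+1)/2 on any interval [1,a] with a>1. Then φ'(t) = h(2/t −1) − (2/t) h'(2/t − 1) > 0 for all t ∈ (0,1), so φ is strictly increasing on (0,1]. -/

import Mathlib

lemma aux_lt (h : ℝ → ℝ)
    (hconc : ConcaveOn ℝ (Set.Ioi (0 : ℝ)) h)
    (h1 : h 1 = 1)
    (hub : ∀ x : ℝ, 0 < x → h x ≤ (x + 1) / 2)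
    (hnl : ∀ a : ℝ, 1 < a → ∃ x ∈ Set.Icc (1 : ℝ) a, h x ≠ (x + 1) / 2)
    {a : ℝ} (ha : 1 < a) : h a < (a + 1) / 2 := by
  rcases lt_or_eq_of_le (hub a (by linarith)) with hlt | heq
  · exact hlt
  exfalso
  obtain ⟨x, hx, hne⟩ := hnl a ha
  have hx0 : (0:ℝ) < x := by linarith [hx.1]
  have hxlt : h x < (x + 1) / 2 := lt_of_le_of_ne (hub x hx0) hne
  -- x is a convex combination of 1 and a
  set μ : ℝ := (x - 1) / (a - 1) with hμ
  set lam : ℝ := (a - x) / (a - 1) with hlam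
  have ha1 : (0:ℝ) < a - 1 := by linarith
  have hlam0 : 0 ≤ lam := div_nonneg (by linarith [hx.2]) ha1.le
  have hμ0 : 0 ≤ μ := div_nonneg (by linarith [hx.1]) ha1.le
  have hsum : lam + μ = 1 := by
    rw [hlam, hμ, ← add_div, show a - x + (x - 1) = a - 1 by ring]
    exact div_self ha1.ne'
  have hcomb : lam • (1:ℝ) + μ • a = x := by
    simp only [smul_eq_mul, hlam, hμ]; field_simp; ring
  have := hconc.2 (Set.mem_Ioi.mpr one_pos) (Set.mem_Ioi.mpr (by linarith : (0:ℝ) < a))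
    hlam0 hμ0 hsum
  rw [hcomb] at this
  rw [h1, heq] at this
  simp only [smul_eq_mul] at this
  have : (x + 1) / 2 ≤ h x := by
    have : lam * 1 + μ * ((a+1)/2) = (x+1)/2 := by
      rw [hlam, hμ]; field_simp; ring
    linarith [this]
  linarith

theorem stmt_17 (h : ℝ → ℝ)
    (hconc : ConcaveOn ℝ (Set.Ioi (0 : ℝ)) h)
    (hdiff : ∀ x ∈ Set.Ioi (0 : ℝ), DifferentiableAt ℝ h x)
    (h1 : h 1 = 1) (hd1 : deriv h 1 = 1/2)
    (hub : ∀ x : ℝ, 0 < x → h x ≤ (x + 1) / 2)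
    (hnl : ∀ a : ℝ, 1 < a → ∃ x ∈ Set.Icc (1 : ℝ) a, h x ≠ (x + 1) / 2) :
    (∀ t ∈ Set.Ioo (0 : ℝ) 1,
      HasDerivAt (fun t : ℝ => t * h (2 / t - 1))
        (h (2 / t - 1) - (2 / t) * deriv h (2 / t - 1)) t ∧
      0 < h (2 / t - 1) - (2 / t) * deriv h (2 / t - 1)) ∧
    StrictMonoOn (fun t : ℝ => t * h (2 / t - 1)) (Set.Ioc (0 : ℝ) 1) := by
  -- general derivative computation for t ∈ Ioc 0 1
  have hderiv : ∀ t : ℝ, 0 < t → t ≤ 1 →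
      HasDerivAt (fun t : ℝ => t * h (2 / t - 1))
        (h (2 / t - 1) - (2 / t) * deriv h (2 / t - 1)) t := by
    intro t ht0 ht1
    have htne : t ≠ 0 := ne_of_gt ht0
    have ha0 : (0:ℝ) < 2 / t - 1 := by
      have : (1:ℝ) < 2 / t := by
        rw [lt_div_iff₀ ht0]; linarith
      linarith
    have hinner : HasDerivAt (fun t : ℝ => 2 / t - 1) (-(2 / t ^ 2)) t := by
      have : HasDerivAt (fun t : ℝ => 2 / t) (-(2 / t ^ 2)) t := by
        have := (hasDerivAt_const t (2:ℝ)).div (hasDerivAt_id t) htne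
        convert this using 1
        all_goals first | rfl | (funext x; rfl) | (simp [neg_div])
      simpa using this.sub_const 1
    have hh : HasDerivAt h (deriv h (2 / t - 1)) (2 / t - 1) :=
      (hdiff _ (Set.mem_Ioi.mpr ha0)).hasDerivAt
    have hcomp := hh.comp t hinner
    have := (hasDerivAt_id t).mul hcomp
    convert this using 1
    all_goals first | rfl | (funext x; rfl) | (simp only [Function.comp, id]; field_simp; ring)
  have hpos : ∀ t : ℝ, 0 < t → t < 1 →
      0 < h (2 / t - 1) - (2 / t) * deriv h (2 / t - 1) := by
    intro t ht0 ht1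
    set a : ℝ := 2 / t - 1 with haa
    have ha : 1 < a := by
      have : (2:ℝ) < 2 / t := by
        rw [lt_div_iff₀ ht0]; linarith
      simp only [haa]; linarith
    have ha0 : (0:ℝ) < a := by linarith
    have hslope : deriv h a ≤ (h a - 1) / (a - 1) := by
      have := hconc.deriv_le_slope (Set.mem_Ioi.mpr one_pos) (Set.mem_Ioi.mpr ha0)
        ha (hdiff _ (Set.mem_Ioi.mpr ha0))
      rwa [slope_def_field, h1] at this
    have hlt : h a < (a + 1) / 2 := aux_lt h hconc h1 hub hnl ha
    have ha1 : (0:ℝ) < a - 1 := by linarith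
    have h2t : 2 / t = a + 1 := by
      simp only [haa]; ring
    rw [h2t]
    have key : deriv h a * (a - 1) ≤ h a - 1 := by
      have := mul_le_mul_of_nonneg_right hslope ha1.le
      rwa [div_mul_cancel₀ _ (ne_of_gt ha1)] at this
    by_contra hcon
    push_neg at hcon
    have k2 := mul_le_mul_of_nonneg_left key (by linarith : (0:ℝ) ≤ a + 1)
    have k3 := mul_le_mul_of_nonneg_left
      (show h a ≤ (a + 1) * deriv h a by linarith) ha1.le
    have k4 : (a - 1) * h a ≤ (a + 1) * (h a - 1) := by
      calc (a - 1) * h a ≤ (a - 1) * ((a + 1) * deriv h a) := k3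
        _ = (a + 1) * (deriv h a * (a - 1)) := by ring
        _ ≤ (a + 1) * (h a - 1) := k2
    ring_nf at k4
    ring_nf at hlt
    linarith [k4, hlt]
  constructor
  · intro t ht
    exact ⟨hderiv t ht.1 ht.2.le, hpos t ht.1 ht.2⟩
  · apply strictMonoOn_of_deriv_pos (convex_Ioc (0:ℝ) 1)
    · intro t ht
      exact ((hderiv t ht.1 ht.2).differentiableAt).continuousAt.continuousWithinAt
    · intro t ht
      rw [interior_Ioc] at ht
      rw [(hderiv t ht.1 ht.2.le).deriv]
      exact hpos t ht.1 ht.2
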